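/- arXiv:1603.06791 — 4 statements merged into one kernel-verified Lean document; each statement's English description precedes it below -/
import Mathlib

section
/- Let n ≥ 1, let a ∈ ℝ and h ∈ ℝ, let W : ℝⁿ → ℝ be continuously differentiable, and let v : ℝⁿ → ℂ be twice continuously differentiable with compact support. Then the following exact integration-by-parts (Rellich–Carleman) identity holds: 2 Re ∫_{{x_n > a}} ((-h²Δ + W)v)(x) · conj(∂_{x_n}v(x)) dx = h² ∫_{{x_n = a}} |∂_{x_n}v(x',a)|² dx' − h² ∫_{{x_n = a}} |∇_{x'}v(x',a)|² dx' − ∫_{{x_n = a}} W(x',a) |v(x',a)|² dx' − ∫_{{x_n > a}} (∂_{x_n}W)(x) |v(x)|² dx, where x = (x', x_n) ∈ ℝⁿ⁻¹ × ℝ, the integrals over {x_n > a} are with respect to Lebesgue measure on ℝⁿ, and the integrals over {x_n = a} are with respect to Lebesgue measure on ℝⁿ⁻¹. -/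
open MeasureTheory

/-- Partial derivative in the last coordinate, for functions on ℝⁿ ≅ ℝ^k × ℝ. -/
noncomputable def pdLast {k : ℕ} (v : (Fin k → ℝ) × ℝ → ℂ) (x : (Fin k → ℝ) × ℝ) : ℂ :=
  fderiv ℝ v x (0, 1)

/-- Partial derivative in the `i`-th tangential coordinate. -/
noncomputable def pdTang {k : ℕ} (i : Fin k) (v : (Fin k → ℝ) × ℝ → ℂ)
    (x : (Fin k → ℝ) × ℝ) : ℂ :=
  fderiv ℝ v x (Pi.single i 1, 0)

/-- Laplacian on ℝⁿ ≅ ℝ^k × ℝ. -/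
noncomputable def lap {k : ℕ} (v : (Fin k → ℝ) × ℝ → ℂ) (x : (Fin k → ℝ) × ℝ) : ℂ :=
  (∑ i : Fin k,
      fderiv ℝ (fun y => fderiv ℝ v y (Pi.single i 1, 0)) x (Pi.single i 1, 0))
    + fderiv ℝ (fun y => fderiv ℝ v y (0, 1)) x (0, 1)

open Complex Set

section helpers
variable {E F : Type*} [NormedAddCommGroup E] [NormedSpace ℝ E]
  [NormedAddCommGroup F] [NormedSpace ℝ F]

lemma re_mul_conj_comm (z w : ℂ) : (z * (starRingEnd ℂ) w).re = (w * (starRingEnd ℂ) z).re := by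
  rw [← Complex.conj_re (z * (starRingEnd ℂ) w)]
  rw [map_mul, Complex.conj_conj, mul_comm]

lemma norm_sq_eq_re_mul_conj (z : ℂ) : ‖z‖ ^ 2 = (z * (starRingEnd ℂ) z).re := by
  rw [Complex.mul_conj, Complex.ofReal_re, Complex.normSq_eq_norm_sq]

lemma hasFDerivAt_re_mul_conj {u₁ u₂ : E → ℂ} {x : E} {d₁ d₂ : E →L[ℝ] ℂ}
    (h1 : HasFDerivAt u₁ d₁ x) (h2 : HasFDerivAt u₂ d₂ x) :
    HasFDerivAt (fun y => (u₁ y * (starRingEnd ℂ) (u₂ y)).re)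
      (Complex.reCLM.comp
        (u₁ x • ((Complex.conjCLE : ℂ →L[ℝ] ℂ).comp d₂) + (starRingEnd ℂ) (u₂ x) • d₁)) x := by
  have hconj : HasFDerivAt (fun y => (starRingEnd ℂ) (u₂ y))
      ((Complex.conjCLE : ℂ →L[ℝ] ℂ).comp d₂) x :=
    (Complex.conjCLE : ℂ →L[ℝ] ℂ).hasFDerivAt.comp x h2
  exact (Complex.reCLM.hasFDerivAt.comp x (h1.mul hconj))

lemma differentiableAt_re_mul_conj {u₁ u₂ : E → ℂ} {x : E}
    (h1 : DifferentiableAt ℝ u₁ x) (h2 : DifferentiableAt ℝ u₂ x) :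
    DifferentiableAt ℝ (fun y => (u₁ y * (starRingEnd ℂ) (u₂ y)).re) x :=
  (hasFDerivAt_re_mul_conj h1.hasFDerivAt h2.hasFDerivAt).differentiableAt

lemma fderiv_re_mul_conj {u₁ u₂ : E → ℂ} {x : E}
    (h1 : DifferentiableAt ℝ u₁ x) (h2 : DifferentiableAt ℝ u₂ x) (w : E) :
    fderiv ℝ (fun y => (u₁ y * (starRingEnd ℂ) (u₂ y)).re) x w
      = (fderiv ℝ u₁ x w * (starRingEnd ℂ) (u₂ x)).re
        + (u₁ x * (starRingEnd ℂ) (fderiv ℝ u₂ x w)).re := by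
  rw [(hasFDerivAt_re_mul_conj h1.hasFDerivAt h2.hasFDerivAt).fderiv]
  simp [Complex.add_re, smul_eq_mul, mul_comm, Complex.mul_re]
  ring

lemma contDiff_pd {v : E → F} (hv : ContDiff ℝ 2 v) (w : E) :
    ContDiff ℝ 1 (fun y => fderiv ℝ v y w) := by
  have hdv : ContDiff ℝ 1 (fderiv ℝ v) := hv.fderiv_right (by norm_num)
  exact (ContinuousLinearMap.apply ℝ F w).contDiff.comp hdv

lemma fderiv_pd {v : E → F} (hv : ContDiff ℝ 2 v) (u w : E) (x : E) :
    fderiv ℝ (fun y => fderiv ℝ v y u) x w = fderiv ℝ (fderiv ℝ v) x w u := by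
  have hdv : ContDiff ℝ 1 (fderiv ℝ v) := hv.fderiv_right (by norm_num)
  rw [fderiv_clm_apply (hdv.differentiable one_ne_zero x) (differentiableAt_const u)]
  simp

lemma pd_symm {v : E → F} (hv : ContDiff ℝ 2 v) (u w : E) (x : E) :
    fderiv ℝ (fun y => fderiv ℝ v y u) x w = fderiv ℝ (fun y => fderiv ℝ v y w) x u := by
  rw [fderiv_pd hv u w x, fderiv_pd hv w u x]
  exact (hv.contDiffAt.isSymmSndFDerivAt (by norm_num)) w u

end helpers

lemma re_expand (r s : ℝ) (L V C : ℂ) :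
    ((-(r:ℂ) * L + (s:ℂ) * V) * (starRingEnd ℂ) C).re
      = -(r * (L * (starRingEnd ℂ) C).re) + s * (V * (starRingEnd ℂ) C).re := by
  simp [add_mul, neg_mul, mul_assoc]

noncomputable def FnAux {k : ℕ} (h : ℝ) (W : (Fin k → ℝ) × ℝ → ℝ)
    (v : (Fin k → ℝ) × ℝ → ℂ) (y : (Fin k → ℝ) × ℝ) : ℝ :=
  h ^ 2 * (∑ i : Fin k, (pdTang i v y * (starRingEnd ℂ) (pdTang i v y)).re)
    - h ^ 2 * (pdLast v y * (starRingEnd ℂ) (pdLast v y)).re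
    + W y * (v y * (starRingEnd ℂ) (v y)).re

noncomputable def FiAux {k : ℕ} (h : ℝ) (i : Fin k)
    (v : (Fin k → ℝ) × ℝ → ℂ) (y : (Fin k → ℝ) × ℝ) : ℝ :=
  -(2 * h ^ 2) * (pdTang i v y * (starRingEnd ℂ) (pdLast v y)).re

lemma key_pointwise {k : ℕ} (h : ℝ) (W : (Fin k → ℝ) × ℝ → ℝ) (hW : ContDiff ℝ 1 W)
    (v : (Fin k → ℝ) × ℝ → ℂ) (hv : ContDiff ℝ 2 v) (x : (Fin k → ℝ) × ℝ) :
    2 * ((-(h ^ 2 : ℂ) * lap v x + (W x : ℂ) * v x) * (starRingEnd ℂ) (pdLast v x)).re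
      = fderiv ℝ (FnAux h W v) x (0, 1)
        + ∑ i : Fin k, fderiv ℝ (FiAux h i v) x (Pi.single i 1, 0)
        - fderiv ℝ W x (0, 1) * ‖v x‖ ^ 2 := by

  classical
  have hvd : Differentiable ℝ v := hv.differentiable (by norm_num)
  have hWd : Differentiable ℝ W := hW.differentiable one_ne_zero
  have hP : Differentiable ℝ (fun y => fderiv ℝ v y ((0 : Fin k → ℝ), (1:ℝ))) :=
    (contDiff_pd hv _).differentiable one_ne_zero
  have hT : ∀ i : Fin k, Differentiable ℝ (fun y => fderiv ℝ v y (Pi.single i 1, (0:ℝ))) :=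
    fun i => (contDiff_pd hv _).differentiable one_ne_zero
  have dsum : DifferentiableAt ℝ (fun y => ∑ i : Fin k,
      (fderiv ℝ v y (Pi.single i 1, (0:ℝ))
        * (starRingEnd ℂ) (fderiv ℝ v y (Pi.single i 1, (0:ℝ)))).re) x :=
    DifferentiableAt.fun_sum (fun i _ => differentiableAt_re_mul_conj (hT i x) (hT i x))
  have dq : DifferentiableAt ℝ (fun y => (fderiv ℝ v y ((0 : Fin k → ℝ), (1:ℝ))
      * (starRingEnd ℂ) (fderiv ℝ v y ((0 : Fin k → ℝ), (1:ℝ)))).re) x :=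
    differentiableAt_re_mul_conj (hP x) (hP x)
  have dr : DifferentiableAt ℝ (fun y => (v y * (starRingEnd ℂ) (v y)).re) x :=
    differentiableAt_re_mul_conj (hvd x) (hvd x)
  -- the three directional derivative computations
  have hsum_en : fderiv ℝ (fun y => ∑ i : Fin k,
      (fderiv ℝ v y (Pi.single i 1, (0:ℝ))
        * (starRingEnd ℂ) (fderiv ℝ v y (Pi.single i 1, (0:ℝ)))).re) x ((0 : Fin k → ℝ), (1:ℝ))
      = ∑ i : Fin k, 2 * ((fderiv ℝ (fun y => fderiv ℝ v y (Pi.single i 1, (0:ℝ))) x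
            ((0 : Fin k → ℝ), (1:ℝ)))
          * (starRingEnd ℂ) (fderiv ℝ v x (Pi.single i 1, (0:ℝ)))).re := by
    rw [fderiv_fun_sum (fun i _ => differentiableAt_re_mul_conj (hT i x) (hT i x)),
      ContinuousLinearMap.sum_apply]
    refine Finset.sum_congr rfl fun i _ => ?_
    rw [fderiv_re_mul_conj (hT i x) (hT i x),
      re_mul_conj_comm (fderiv ℝ v x (Pi.single i 1, (0:ℝ)))]
    ring
  have hq_en : fderiv ℝ (fun y => (fderiv ℝ v y ((0 : Fin k → ℝ), (1:ℝ))
      * (starRingEnd ℂ) (fderiv ℝ v y ((0 : Fin k → ℝ), (1:ℝ)))).re) x ((0 : Fin k → ℝ), (1:ℝ))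
      = 2 * ((fderiv ℝ (fun y => fderiv ℝ v y ((0 : Fin k → ℝ), (1:ℝ))) x ((0 : Fin k → ℝ), (1:ℝ)))
          * (starRingEnd ℂ) (fderiv ℝ v x ((0 : Fin k → ℝ), (1:ℝ)))).re := by
    rw [fderiv_re_mul_conj (hP x) (hP x),
      re_mul_conj_comm (fderiv ℝ v x ((0 : Fin k → ℝ), (1:ℝ)))]
    ring
  have hr_en : fderiv ℝ (fun y => (v y * (starRingEnd ℂ) (v y)).re) x ((0 : Fin k → ℝ), (1:ℝ))
      = 2 * (v x * (starRingEnd ℂ) (fderiv ℝ v x ((0 : Fin k → ℝ), (1:ℝ)))).re := by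
    rw [fderiv_re_mul_conj (hvd x) (hvd x),
      re_mul_conj_comm (fderiv ℝ v x ((0 : Fin k → ℝ), (1:ℝ))) (v x)]
    ring
  have hFi : ∀ i : Fin k, fderiv ℝ (FiAux h i v) x (Pi.single i 1, (0:ℝ))
      = -(2 * h ^ 2) * (((fderiv ℝ (fun y => fderiv ℝ v y (Pi.single i 1, (0:ℝ))) x
            (Pi.single i 1, (0:ℝ)))
          * (starRingEnd ℂ) (fderiv ℝ v x ((0 : Fin k → ℝ), (1:ℝ)))).re
        + ((fderiv ℝ (fun y => fderiv ℝ v y (Pi.single i 1, (0:ℝ))) x ((0 : Fin k → ℝ), (1:ℝ)))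
          * (starRingEnd ℂ) (fderiv ℝ v x (Pi.single i 1, (0:ℝ)))).re) := by
    intro i
    have : FiAux h i v = fun y => -(2 * h ^ 2) * ((fderiv ℝ v y (Pi.single i 1, (0:ℝ)))
        * (starRingEnd ℂ) (fderiv ℝ v y ((0 : Fin k → ℝ), (1:ℝ)))).re := rfl
    rw [this, fderiv_const_mul (differentiableAt_re_mul_conj (hT i x) (hP x)),
      ContinuousLinearMap.smul_apply, fderiv_re_mul_conj (hT i x) (hP x),
      pd_symm hv ((0 : Fin k → ℝ), (1:ℝ)) (Pi.single i 1, (0:ℝ)) x,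
      re_mul_conj_comm (fderiv ℝ v x (Pi.single i 1, (0:ℝ)))]
    simp [smul_eq_mul]
  have hFn : fderiv ℝ (FnAux h W v) x ((0 : Fin k → ℝ), (1:ℝ))
      = h ^ 2 * (∑ i : Fin k, 2 * ((fderiv ℝ (fun y => fderiv ℝ v y (Pi.single i 1, (0:ℝ))) x
            ((0 : Fin k → ℝ), (1:ℝ)))
          * (starRingEnd ℂ) (fderiv ℝ v x (Pi.single i 1, (0:ℝ)))).re)
        - h ^ 2 * (2 * ((fderiv ℝ (fun y => fderiv ℝ v y ((0 : Fin k → ℝ), (1:ℝ))) x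
            ((0 : Fin k → ℝ), (1:ℝ)))
          * (starRingEnd ℂ) (fderiv ℝ v x ((0 : Fin k → ℝ), (1:ℝ)))).re)
        + (fderiv ℝ W x ((0 : Fin k → ℝ), (1:ℝ)) * (v x * (starRingEnd ℂ) (v x)).re
          + W x * (2 * (v x * (starRingEnd ℂ)
              (fderiv ℝ v x ((0 : Fin k → ℝ), (1:ℝ)))).re)) := by
    have hFnEq : FnAux h W v = fun y =>
        (h ^ 2 * (∑ i : Fin k, (fderiv ℝ v y (Pi.single i 1, (0:ℝ))
            * (starRingEnd ℂ) (fderiv ℝ v y (Pi.single i 1, (0:ℝ)))).re)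
          - h ^ 2 * (fderiv ℝ v y ((0 : Fin k → ℝ), (1:ℝ))
            * (starRingEnd ℂ) (fderiv ℝ v y ((0 : Fin k → ℝ), (1:ℝ)))).re)
          + W y * (v y * (starRingEnd ℂ) (v y)).re := rfl
    rw [hFnEq, fderiv_fun_add ((dsum.const_mul _).fun_sub (dq.const_mul _)) ((hWd x).fun_mul dr),
      ContinuousLinearMap.add_apply,
      fderiv_fun_sub (dsum.const_mul _) (dq.const_mul _), ContinuousLinearMap.sub_apply,
      fderiv_const_mul dsum, fderiv_const_mul dq,
      ContinuousLinearMap.smul_apply, ContinuousLinearMap.smul_apply,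
      fderiv_fun_mul (hWd x) dr, ContinuousLinearMap.add_apply,
      ContinuousLinearMap.smul_apply, ContinuousLinearMap.smul_apply,
      hsum_en, hq_en, hr_en]
    simp [smul_eq_mul]
    ring
  -- expand the left-hand side
  have hlap : (lap v x * (starRingEnd ℂ) (fderiv ℝ v x ((0 : Fin k → ℝ), (1:ℝ)))).re
      = (∑ i : Fin k, ((fderiv ℝ (fun y => fderiv ℝ v y (Pi.single i 1, (0:ℝ))) x
            (Pi.single i 1, (0:ℝ)))
          * (starRingEnd ℂ) (fderiv ℝ v x ((0 : Fin k → ℝ), (1:ℝ)))).re)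
        + ((fderiv ℝ (fun y => fderiv ℝ v y ((0 : Fin k → ℝ), (1:ℝ))) x ((0 : Fin k → ℝ), (1:ℝ)))
          * (starRingEnd ℂ) (fderiv ℝ v x ((0 : Fin k → ℝ), (1:ℝ)))).re := by
    rw [lap, add_mul, Complex.add_re, Finset.sum_mul, Complex.re_sum]
  have hLHS : 2 * ((-(h ^ 2 : ℂ) * lap v x + ((W x : ℝ) : ℂ) * v x)
        * (starRingEnd ℂ) (pdLast v x)).re
      = 2 * (-(h ^ 2 * (lap v x
            * (starRingEnd ℂ) (fderiv ℝ v x ((0 : Fin k → ℝ), (1:ℝ)))).re)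
          + W x * (v x * (starRingEnd ℂ) (fderiv ℝ v x ((0 : Fin k → ℝ), (1:ℝ)))).re) := by
    have : pdLast v x = fderiv ℝ v x ((0 : Fin k → ℝ), (1:ℝ)) := rfl
    rw [this, show ((h : ℂ)) ^ 2 = ((h ^ 2 : ℝ) : ℂ) by push_cast; ring,
      re_expand (h ^ 2) (W x)]
  rw [hLHS, hFn, hlap]
  rw [Finset.sum_congr rfl fun i (_ : i ∈ Finset.univ) => hFi i]
  rw [norm_sq_eq_re_mul_conj]
  rw [Finset.mul_sum]
  have hcomb : (∑ i : Fin k, h ^ 2 *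
        (2 * ((fderiv ℝ (fun y => fderiv ℝ v y (Pi.single i 1, (0:ℝ))) x) ((0 : Fin k → ℝ), (1:ℝ))
          * (starRingEnd ℂ) ((fderiv ℝ v x) (Pi.single i 1, (0:ℝ)))).re))
      + (∑ i : Fin k, -(2 * h ^ 2) *
        (((fderiv ℝ (fun y => fderiv ℝ v y (Pi.single i 1, (0:ℝ))) x) (Pi.single i 1, (0:ℝ))
            * (starRingEnd ℂ) ((fderiv ℝ v x) ((0 : Fin k → ℝ), (1:ℝ)))).re
          + ((fderiv ℝ (fun y => fderiv ℝ v y (Pi.single i 1, (0:ℝ))) x) ((0 : Fin k → ℝ), (1:ℝ))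
            * (starRingEnd ℂ) ((fderiv ℝ v x) (Pi.single i 1, (0:ℝ)))).re))
      = -(2 * h ^ 2) * ∑ i : Fin k,
          ((fderiv ℝ (fun y => fderiv ℝ v y (Pi.single i 1, (0:ℝ))) x) (Pi.single i 1, (0:ℝ))
            * (starRingEnd ℂ) ((fderiv ℝ v x) ((0 : Fin k → ℝ), (1:ℝ)))).re := by
    rw [Finset.mul_sum, ← Finset.sum_add_distrib]
    exact Finset.sum_congr rfl fun i _ => by ring
  linear_combination (-1 : ℝ) * hcomb



lemma support_pd {E F : Type*} [NormedAddCommGroup E] [NormedSpace ℝ E]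
    [NormedAddCommGroup F] [NormedSpace ℝ F] {v : E → F} (w : E) {x : E}
    (hx : x ∉ tsupport v) : fderiv ℝ v x w = 0 := by
  have : fderiv ℝ v x = 0 := by
    by_contra hne
    exact hx (support_fderiv_subset (𝕜 := ℝ) (f := v) hne)
  simp [this]

variable {k : ℕ}

lemma halfspace_eq (a : ℝ) :
    {x : (Fin k → ℝ) × ℝ | a < x.2} = (Set.univ : Set (Fin k → ℝ)) ×ˢ Set.Ioi a := by
  ext x; simp

lemma prod_restrict_eq (a : ℝ) :
    ((volume : Measure (Fin k → ℝ))).prod ((volume : Measure ℝ).restrict (Set.Ioi a))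
      = ((volume : Measure (Fin k → ℝ)).prod volume).restrict
          ((Set.univ : Set (Fin k → ℝ)) ×ˢ Set.Ioi a) := by
  have e := Measure.prod_restrict (μ := (volume : Measure (Fin k → ℝ)))
    (ν := (volume : Measure ℝ)) Set.univ (Set.Ioi a)
  rwa [Measure.restrict_univ] at e

lemma ftc_half (a : ℝ) (G : (Fin k → ℝ) × ℝ → ℝ) (hG : ContDiff ℝ 1 G)
    (hGc : HasCompactSupport G) :
    ∫ x in {x : (Fin k → ℝ) × ℝ | a < x.2}, fderiv ℝ G x (0, 1)
      = -∫ x' : Fin k → ℝ, G (x', a) := by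
  have hGd := hG.differentiable one_ne_zero
  have hcont : Continuous fun x : (Fin k → ℝ) × ℝ => fderiv ℝ G x (0, 1) :=
    (ContinuousLinearMap.apply ℝ ℝ (((0 : Fin k → ℝ), (1 : ℝ)))).continuous.comp
      (hG.continuous_fderiv one_ne_zero)
  have hsupp : HasCompactSupport fun x : (Fin k → ℝ) × ℝ => fderiv ℝ G x (0, 1) :=
    hGc.fderiv_apply ℝ ((0 : Fin k → ℝ), (1 : ℝ))
  have hint : Integrable (fun x : (Fin k → ℝ) × ℝ => fderiv ℝ G x (0, 1)) :=
    hcont.integrable_of_hasCompactSupport hsupp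
  have hint' : Integrable (fun x : (Fin k → ℝ) × ℝ => fderiv ℝ G x (0, 1))
      (((volume : Measure (Fin k → ℝ))).prod ((volume : Measure ℝ).restrict (Set.Ioi a))) := by
    rw [prod_restrict_eq, ← Measure.volume_eq_prod]
    exact hint.restrict
  calc ∫ x in {x : (Fin k → ℝ) × ℝ | a < x.2}, fderiv ℝ G x (0, 1)
      = ∫ x, fderiv ℝ G x (0, 1)
          ∂(((volume : Measure (Fin k → ℝ))).prod ((volume : Measure ℝ).restrict (Set.Ioi a))) := by
        rw [halfspace_eq, Measure.volume_eq_prod, prod_restrict_eq]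
    _ = ∫ x' : Fin k → ℝ, ∫ t in Set.Ioi a, fderiv ℝ G (x', t) (0, 1) :=
        integral_prod _ hint'
    _ = ∫ x' : Fin k → ℝ, -G (x', a) := by
        apply integral_congr_ae
        apply Filter.Eventually.of_forall
        intro x'
        have hφd : ∀ t, HasDerivAt (fun t => G (x', t)) (fderiv ℝ G (x', t) (0, 1)) t :=
          fun t => (hGd (x', t)).hasFDerivAt.comp_hasDerivAt t
            ((hasDerivAt_const t x').prodMk (hasDerivAt_id t))
        have hφ : ContDiff ℝ 1 fun t => G (x', t) := hG.comp (contDiff_const.prodMk contDiff_id)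
        have hφc : HasCompactSupport fun t => G (x', t) := by
          apply HasCompactSupport.intro (hGc.image continuous_snd)
          intro t ht
          by_contra hne
          exact ht ⟨(x', t), subset_tsupport _ hne, rfl⟩
        have key := HasCompactSupport.integral_Ioi_deriv_eq hφ hφc a
        show (∫ t in Set.Ioi a, fderiv ℝ G (x', t) (0, 1)) = -G (x', a)
        rw [← key]
        apply integral_congr_ae
        apply Filter.Eventually.of_forall
        intro t
        exact ((hφd t).deriv).symm
    _ = -∫ x' : Fin k → ℝ, G (x', a) := integral_neg _

lemma tang_zero (a : ℝ) (i : Fin k) (G : (Fin k → ℝ) × ℝ → ℝ) (hG : ContDiff ℝ 1 G)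
    (hGc : HasCompactSupport G) :
    ∫ x in {x : (Fin k → ℝ) × ℝ | a < x.2}, fderiv ℝ G x (Pi.single i 1, 0) = 0 := by
  have hGd := hG.differentiable one_ne_zero
  set w : (Fin k → ℝ) × ℝ := (Pi.single i 1, 0) with hw
  have hcont : Continuous fun x : (Fin k → ℝ) × ℝ => fderiv ℝ G x w :=
    (ContinuousLinearMap.apply ℝ ℝ w).continuous.comp (hG.continuous_fderiv one_ne_zero)
  have hsupp : HasCompactSupport fun x : (Fin k → ℝ) × ℝ => fderiv ℝ G x w :=
    hGc.fderiv_apply ℝ w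
  have hint : Integrable (fun x : (Fin k → ℝ) × ℝ => fderiv ℝ G x w) :=
    hcont.integrable_of_hasCompactSupport hsupp
  have hint' : Integrable (fun x : (Fin k → ℝ) × ℝ => fderiv ℝ G x w)
      (((volume : Measure (Fin k → ℝ))).prod ((volume : Measure ℝ).restrict (Set.Ioi a))) := by
    rw [prod_restrict_eq, ← Measure.volume_eq_prod]
    exact hint.restrict
  calc ∫ x in {x : (Fin k → ℝ) × ℝ | a < x.2}, fderiv ℝ G x w
      = ∫ x, fderiv ℝ G x w
          ∂(((volume : Measure (Fin k → ℝ))).prod ((volume : Measure ℝ).restrict (Set.Ioi a))) := by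
        rw [halfspace_eq, Measure.volume_eq_prod, prod_restrict_eq]
    _ = ∫ t in Set.Ioi a, ∫ x' : Fin k → ℝ, fderiv ℝ G (x', t) w :=
        integral_prod_symm _ hint'
    _ = 0 := by
        have hz : ∀ t : ℝ, (∫ x' : Fin k → ℝ, fderiv ℝ G (x', t) w) = 0 := ?_
        · simp [hz]
        intro t
        -- slice function
        set g : (Fin k → ℝ) → ℝ := fun x' => G (x', t) with hg
        have hder : ∀ x', HasFDerivAt g
            ((fderiv ℝ G (x', t)).comp (ContinuousLinearMap.inl ℝ (Fin k → ℝ) ℝ)) x' :=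
          fun x' => (hGd (x', t)).hasFDerivAt.comp x' (hasFDerivAt_prodMk_left x' t)
        have hgc1 : ContDiff ℝ 1 g := hG.comp (contDiff_id.prodMk contDiff_const)
        have hgcc : HasCompactSupport g := by
          apply HasCompactSupport.intro (hGc.image continuous_fst)
          intro x' hx'
          by_contra hne
          exact hx' ⟨(x', t), subset_tsupport _ hne, rfl⟩
        have hfd : ∀ x', fderiv ℝ g x' (Pi.single i 1) = fderiv ℝ G (x', t) w := by
          intro x'
          rw [(hder x').fderiv]
          simp [hw]
        have h0 := integral_mul_fderiv_eq_neg_fderiv_mul_of_integrable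
          (μ := (volume : Measure (Fin k → ℝ)))
          (f := fun _ : Fin k → ℝ => (1 : ℝ)) (g := g) (v := Pi.single i 1)
          ?_ ?_ ?_ (fun x' _ => differentiableAt_const (1:ℝ)) (fun x' _ => (hder x').differentiableAt)
        · rw [← funext hfd]
          simpa using h0
        · have : (fun x' : Fin k → ℝ => fderiv ℝ (fun _ => (1:ℝ)) x' (Pi.single i 1) * g x')
              = fun _ => 0 := by
            funext x'; simp [fderiv_const]
          rw [this]
          exact integrable_zero _ _ _
        · have hc : Continuous fun x' => fderiv ℝ g x' (Pi.single i 1) :=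
            (ContinuousLinearMap.apply ℝ ℝ (Pi.single i 1 : Fin k → ℝ)).continuous.comp
              (hgc1.continuous_fderiv one_ne_zero)
          have hs : HasCompactSupport fun x' => fderiv ℝ g x' (Pi.single i 1) :=
            hgcc.fderiv_apply ℝ _
          simpa using hc.integrable_of_hasCompactSupport hs
        · simpa using hgc1.continuous.integrable_of_hasCompactSupport hgcc


/-- Exact Rellich–Carleman integration-by-parts identity (Lemma in Proposition 6.1):
`2 Re ∫_{xₙ>a} ((-h²Δ + W)v) conj(∂ₙ v) dx
  = h² ∫_{xₙ=a} |∂ₙ v|² dx' - h² ∫_{xₙ=a} |∇' v|² dx'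
    - ∫_{xₙ=a} W |v|² dx' - ∫_{xₙ>a} (∂ₙ W) |v|² dx`. -/
theorem stmt1 {k : ℕ} (a h : ℝ) (W : (Fin k → ℝ) × ℝ → ℝ) (hW : ContDiff ℝ 1 W)
    (v : (Fin k → ℝ) × ℝ → ℂ) (hv : ContDiff ℝ 2 v) (hvc : HasCompactSupport v) :
    2 * (∫ x in {x : (Fin k → ℝ) × ℝ | a < x.2},
          ((-(h ^ 2 : ℂ) * lap v x + (W x : ℂ) * v x) * (starRingEnd ℂ) (pdLast v x))).re
      = h ^ 2 * (∫ x' : Fin k → ℝ, ‖pdLast v (x', a)‖ ^ 2)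
        - h ^ 2 * (∫ x' : Fin k → ℝ, ∑ i : Fin k, ‖pdTang i v (x', a)‖ ^ 2)
        - (∫ x' : Fin k → ℝ, W (x', a) * ‖v (x', a)‖ ^ 2)
        - (∫ x in {x : (Fin k → ℝ) × ℝ | a < x.2},
            (fderiv ℝ W x (0, 1)) * ‖v x‖ ^ 2) := by
  classical
  have hvd : Differentiable ℝ v := hv.differentiable (by norm_num)
  have hWc : Continuous W := hW.continuous
  have hvcont : Continuous v := hv.continuous
  -- continuity of first derivatives
  have hPc : Continuous (pdLast v) := (contDiff_pd hv ((0 : Fin k → ℝ), (1:ℝ))).continuous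
  have hTc : ∀ i : Fin k, Continuous (pdTang i v) :=
    fun i => (contDiff_pd hv (Pi.single i 1, (0:ℝ))).continuous
  have hlapc : Continuous (lap v) := by
    have h1 : ∀ w w' : (Fin k → ℝ) × ℝ,
        Continuous fun x => fderiv ℝ (fun y => fderiv ℝ v y w) x w' := fun w w' =>
      (ContinuousLinearMap.apply ℝ ℂ w').continuous.comp
        ((contDiff_pd hv w).continuous_fderiv one_ne_zero)
    exact (continuous_finset_sum _ fun i _ => h1 _ _).add (h1 _ _)
  -- vanishing off the support of v
  have hvan : ∀ x ∉ tsupport v, v x = 0 := fun x hx => image_eq_zero_of_notMem_tsupport hx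
  have hPvan : ∀ x ∉ tsupport v, pdLast v x = 0 := fun x hx => support_pd _ hx
  have hTvan : ∀ (i : Fin k), ∀ x ∉ tsupport v, pdTang i v x = 0 :=
    fun i x hx => support_pd _ hx
  -- regularity of the auxiliary functions
  have hre : ∀ (u₁ u₂ : (Fin k → ℝ) × ℝ → ℂ), ContDiff ℝ 1 u₁ → ContDiff ℝ 1 u₂ →
      ContDiff ℝ 1 fun y => (u₁ y * (starRingEnd ℂ) (u₂ y)).re := by
    intro u₁ u₂ h1 h2
    exact (Complex.reCLM : ℂ →L[ℝ] ℝ).contDiff.comp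
      (h1.mul ((Complex.conjCLE : ℂ →L[ℝ] ℂ).contDiff.comp h2))
  have hP1 : ContDiff ℝ 1 (pdLast v) := contDiff_pd hv _
  have hT1 : ∀ i : Fin k, ContDiff ℝ 1 (pdTang i v) := fun i => contDiff_pd hv _
  have hv2 : ContDiff ℝ 1 v := hv.of_le (by norm_num)
  have hFn1 : ContDiff ℝ 1 (FnAux h W v) :=
    ((contDiff_const.mul (ContDiff.sum fun i _ => hre _ _ (hT1 i) (hT1 i))).sub
      (contDiff_const.mul (hre _ _ hP1 hP1))).add (hW.mul (hre _ _ hv2 hv2))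
  have hFnc : HasCompactSupport (FnAux h W v) := by
    apply HasCompactSupport.intro hvc
    intro x hx
    simp [FnAux, hPvan x hx, hTvan _ x hx, hvan x hx]
  have hFi1 : ∀ i : Fin k, ContDiff ℝ 1 (FiAux h i v) :=
    fun i => contDiff_const.mul (hre _ _ (hT1 i) hP1)
  have hFic : ∀ i : Fin k, HasCompactSupport (FiAux h i v) := by
    intro i
    apply HasCompactSupport.intro hvc
    intro x hx
    simp [FiAux, hPvan x hx, hTvan i x hx]
  -- integrability of the complex integrand
  have hfcont : Continuous fun x =>
      ((-(h ^ 2 : ℂ) * lap v x + (W x : ℂ) * v x) * (starRingEnd ℂ) (pdLast v x)) := by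
    apply Continuous.mul
    · exact ((continuous_const.mul hlapc).add
        ((Complex.continuous_ofReal.comp hWc).mul hvcont))
    · exact Complex.continuous_conj.comp hPc
  have hfint : Integrable (fun x =>
      ((-(h ^ 2 : ℂ) * lap v x + (W x : ℂ) * v x) * (starRingEnd ℂ) (pdLast v x))) := by
    apply hfcont.integrable_of_hasCompactSupport
    apply HasCompactSupport.intro hvc
    intro x hx
    simp [hPvan x hx]
  -- move re inside the integral
  rw [show (∫ x in {x : (Fin k → ℝ) × ℝ | a < x.2},
        ((-(h ^ 2 : ℂ) * lap v x + (W x : ℂ) * v x) * (starRingEnd ℂ) (pdLast v x))).re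
      = ∫ x in {x : (Fin k → ℝ) × ℝ | a < x.2},
        ((-(h ^ 2 : ℂ) * lap v x + (W x : ℂ) * v x) * (starRingEnd ℂ) (pdLast v x)).re by
    have := integral_re (μ := volume.restrict {x : (Fin k → ℝ) × ℝ | a < x.2}) hfint.restrict
    simp only [RCLike.re_to_complex] at this
    exact this.symm]
  rw [← integral_const_mul]
  -- pointwise identity
  rw [integral_congr_ae (Filter.Eventually.of_forall fun x => key_pointwise h W hW v hv x)]
  -- integrability of the three pieces
  have hInt1 : Integrable fun x : (Fin k → ℝ) × ℝ =>
      fderiv ℝ (FnAux h W v) x ((0 : Fin k → ℝ), (1:ℝ)) := by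
    apply Continuous.integrable_of_hasCompactSupport
    · exact (ContinuousLinearMap.apply ℝ ℝ _).continuous.comp (hFn1.continuous_fderiv one_ne_zero)
    · exact hFnc.fderiv_apply ℝ _
  have hInt2 : ∀ i : Fin k, Integrable fun x : (Fin k → ℝ) × ℝ =>
      fderiv ℝ (FiAux h i v) x (Pi.single i 1, (0:ℝ)) := by
    intro i
    apply Continuous.integrable_of_hasCompactSupport
    · exact (ContinuousLinearMap.apply ℝ ℝ _).continuous.comp
        ((hFi1 i).continuous_fderiv one_ne_zero)
    · exact (hFic i).fderiv_apply ℝ _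
  have hInt3 : Integrable fun x : (Fin k → ℝ) × ℝ => fderiv ℝ W x ((0 : Fin k → ℝ), (1:ℝ))
      * ‖v x‖ ^ 2 := by
    apply Continuous.integrable_of_hasCompactSupport
    · exact ((ContinuousLinearMap.apply ℝ ℝ _).continuous.comp
        (hW.continuous_fderiv one_ne_zero)).mul ((hvcont.norm).pow 2)
    · apply HasCompactSupport.intro hvc
      intro x hx
      simp [hvan x hx]
  -- split the integral
  have hsum2 : Integrable (fun x : (Fin k → ℝ) × ℝ => ∑ i : Fin k,
      fderiv ℝ (FiAux h i v) x (Pi.single i 1, (0:ℝ)))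
      (volume.restrict {x : (Fin k → ℝ) × ℝ | a < x.2}) :=
    integrable_finset_sum _ fun i _ => (hInt2 i).restrict
  have h12 : Integrable (fun x : (Fin k → ℝ) × ℝ =>
      fderiv ℝ (FnAux h W v) x ((0 : Fin k → ℝ), (1:ℝ)) + ∑ i : Fin k,
        fderiv ℝ (FiAux h i v) x (Pi.single i 1, (0:ℝ)))
      (volume.restrict {x : (Fin k → ℝ) × ℝ | a < x.2}) := hInt1.restrict.add hsum2
  rw [integral_sub h12 hInt3.restrict,
    integral_add hInt1.restrict hsum2,
    integral_finset_sum _ fun i _ => (hInt2 i).restrict]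
  -- the tangential terms vanish
  rw [Finset.sum_eq_zero fun i _ => tang_zero a i (FiAux h i v) (hFi1 i) (hFic i)]
  -- the normal term gives the boundary integral
  rw [ftc_half a (FnAux h W v) hFn1 hFnc]
  -- boundary integrability
  have hKc : IsCompact (Prod.fst '' tsupport v) := hvc.image continuous_fst
  have hslice : ∀ x' : Fin k → ℝ, x' ∉ Prod.fst '' tsupport v →
      (x', a) ∉ tsupport v := by
    intro x' hx' hmem
    exact hx' ⟨(x', a), hmem, rfl⟩
  have hbd1 : Integrable fun x' : Fin k → ℝ => ∑ i : Fin k,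
      (pdTang i v (x', a) * (starRingEnd ℂ) (pdTang i v (x', a))).re := by
    apply Continuous.integrable_of_hasCompactSupport
    · exact continuous_finset_sum _ fun i _ =>
        (Complex.continuous_re.comp (((hTc i).comp (continuous_id.prodMk continuous_const)).mul
          (Complex.continuous_conj.comp ((hTc i).comp (continuous_id.prodMk continuous_const)))))
    · apply HasCompactSupport.intro hKc
      intro x' hx'
      simp [hTvan _ _ (hslice x' hx')]
  have hbd2 : Integrable fun x' : Fin k → ℝ =>
      (pdLast v (x', a) * (starRingEnd ℂ) (pdLast v (x', a))).re := by
    apply Continuous.integrable_of_hasCompactSupport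
    · exact Complex.continuous_re.comp ((hPc.comp (continuous_id.prodMk continuous_const)).mul
        (Complex.continuous_conj.comp (hPc.comp (continuous_id.prodMk continuous_const))))
    · apply HasCompactSupport.intro hKc
      intro x' hx'
      simp [hPvan _ (hslice x' hx')]
  have hbd3 : Integrable fun x' : Fin k → ℝ =>
      W (x', a) * (v (x', a) * (starRingEnd ℂ) (v (x', a))).re := by
    apply Continuous.integrable_of_hasCompactSupport
    · exact (hWc.comp (continuous_id.prodMk continuous_const)).mul
        (Complex.continuous_re.comp ((hvcont.comp (continuous_id.prodMk continuous_const)).mul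
          (Complex.continuous_conj.comp (hvcont.comp (continuous_id.prodMk continuous_const)))))
    · apply HasCompactSupport.intro hKc
      intro x' hx'
      simp [hvan _ (hslice x' hx')]
  -- split the boundary integral
  have hbsplit : (∫ x' : Fin k → ℝ, FnAux h W v (x', a))
      = h ^ 2 * (∫ x' : Fin k → ℝ, ∑ i : Fin k,
            (pdTang i v (x', a) * (starRingEnd ℂ) (pdTang i v (x', a))).re)
        - h ^ 2 * (∫ x' : Fin k → ℝ,
            (pdLast v (x', a) * (starRingEnd ℂ) (pdLast v (x', a))).re)
        + ∫ x' : Fin k → ℝ, W (x', a) * (v (x', a) * (starRingEnd ℂ) (v (x', a))).re := by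
    rw [show (fun x' : Fin k → ℝ => FnAux h W v (x', a)) = fun x' =>
        (h ^ 2 * (∑ i : Fin k, (pdTang i v (x', a)
            * (starRingEnd ℂ) (pdTang i v (x', a))).re)
          - h ^ 2 * (pdLast v (x', a) * (starRingEnd ℂ) (pdLast v (x', a))).re)
          + W (x', a) * (v (x', a) * (starRingEnd ℂ) (v (x', a))).re from rfl]
    have hc1 : Integrable (fun x' : Fin k → ℝ => h ^ 2 * ∑ i : Fin k,
        (pdTang i v (x', a) * (starRingEnd ℂ) (pdTang i v (x', a))).re) volume :=
      hbd1.const_mul _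
    have hc2 : Integrable (fun x' : Fin k → ℝ =>
        h ^ 2 * (pdLast v (x', a) * (starRingEnd ℂ) (pdLast v (x', a))).re) volume :=
      hbd2.const_mul _
    have hc12 : Integrable (fun x' : Fin k → ℝ => h ^ 2 * (∑ i : Fin k,
        (pdTang i v (x', a) * (starRingEnd ℂ) (pdTang i v (x', a))).re)
          - h ^ 2 * (pdLast v (x', a) * (starRingEnd ℂ) (pdLast v (x', a))).re) volume :=
      hc1.sub hc2
    rw [integral_add hc12 hbd3, integral_sub hc1 hc2,
      integral_const_mul, integral_const_mul]
  rw [hbsplit]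
  -- convert to norms
  have en1 : (∫ x' : Fin k → ℝ,
      (pdLast v (x', a) * (starRingEnd ℂ) (pdLast v (x', a))).re)
      = ∫ x' : Fin k → ℝ, ‖pdLast v (x', a)‖ ^ 2 := by
    simp only [← norm_sq_eq_re_mul_conj]
  have en2 : (∫ x' : Fin k → ℝ, ∑ i : Fin k,
      (pdTang i v (x', a) * (starRingEnd ℂ) (pdTang i v (x', a))).re)
      = ∫ x' : Fin k → ℝ, ∑ i : Fin k, ‖pdTang i v (x', a)‖ ^ 2 := by
    simp only [← norm_sq_eq_re_mul_conj]
  have en3 : (∫ x' : Fin k → ℝ, W (x', a) * (v (x', a) * (starRingEnd ℂ) (v (x', a))).re)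
      = ∫ x' : Fin k → ℝ, W (x', a) * ‖v (x', a)‖ ^ 2 := by
    simp only [← norm_sq_eq_re_mul_conj]
  rw [en1, en2, en3]
  ring
end

section
/- Let n ≥ 1, let M > 0 and R > 0, let ψ : ℝⁿ → ℝ be continuously differentiable and V : ℝⁿ → ℝ satisfy the eikonal equation |∇ψ(y)|² + V(y) = 0 for all y, with |∇ψ(y)| ≤ M for all y. Let τ ∈ ℝⁿ with |τ| = 1, and define the complex phase φ(x,y,τ) := (x−y)·τ + (i/2)|x−y|², so that ∇_y φ(x,y,τ) = −τ − i(x−y) ∈ ℂⁿ. For μ ∈ (0,1], ρ ∈ ℂ with |ρ| ≤ R, and x, y ∈ ℝⁿ with |x−y| ≤ 1, define c₂ := Σ_{j=1}^n (μ ∂_j ψ(y) − ∂_{y_j}φ(x,y,τ))² + μ²(V(y) − ρ) ∈ ℂ (where the square is the complex square, not the modulus squared). Then |c₂ − 1| ≤ (3 + 4M + R)(|x−y| + μ). -/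
open Complex

set_option maxHeartbeats 1000000 in
/-- Leading-order symbol computation (Section 5 of the paper): with the eikonal
equation `|∇ψ|² + V = 0`, `|∇ψ| ≤ M`, `|τ| = 1`, `∇_y φ = -τ - i(x-y)` for the
phase `φ(x,y,τ) = (x-y)·τ + (i/2)|x-y|²`, the coefficient
`c₂ = Σⱼ (μ ∂ⱼψ(y) - ∂_{yⱼ}φ)² + μ²(V(y) - ρ)` satisfies
`|c₂ - 1| ≤ (3 + 4M + R)(|x - y| + μ)`. -/
theorem stmt4 {n : ℕ} (hn : 1 ≤ n) (M R : ℝ) (hM : 0 < M) (hR : 0 < R)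
    (ψ : EuclideanSpace ℝ (Fin n) → ℝ) (V : EuclideanSpace ℝ (Fin n) → ℝ)
    (hψ : ContDiff ℝ 1 ψ)
    (heik : ∀ y, ‖gradient ψ y‖ ^ 2 + V y = 0)
    (hgrad : ∀ y, ‖gradient ψ y‖ ≤ M)
    (τ : EuclideanSpace ℝ (Fin n)) (hτ : ‖τ‖ = 1)
    (μ : ℝ) (hμ : μ ∈ Set.Ioc (0 : ℝ) 1) (ρ : ℂ) (hρ : ‖ρ‖ ≤ R)
    (x y : EuclideanSpace ℝ (Fin n)) (hxy : ‖x - y‖ ≤ 1) :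
    ‖      ((∑ j : Fin n,
          ((μ * fderiv ℝ ψ y (EuclideanSpace.single j 1) : ℂ)
            - (-(τ j : ℂ) - Complex.I * ((x j : ℂ) - (y j : ℂ)))) ^ 2)
        + (μ : ℂ) ^ 2 * ((V y : ℂ) - ρ) - 1)‖
      ≤ (3 + 4 * M + R) * (‖x - y‖ + μ) := by
  obtain ⟨hμ0, hμ1⟩ := hμ
  set g := gradient ψ y with hgdef
  -- fderiv in direction single j 1 is the j-th component of the gradient
  have hfd : ∀ j : Fin n, fderiv ℝ ψ y (EuclideanSpace.single j 1) = g j := by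
    intro j
    have hdiff : DifferentiableAt ℝ ψ y := (hψ.differentiable one_ne_zero) y
    have h1 : fderiv ℝ ψ y = InnerProductSpace.toDual ℝ _ g :=
      hdiff.hasGradientAt.hasFDerivAt.fderiv
    rw [h1, InnerProductSpace.toDual_apply_apply, EuclideanSpace.inner_single_right]
    simp
  -- abbreviations
  set d : EuclideanSpace ℝ (Fin n) := x - y with hd
  have hdj : ∀ j : Fin n, d j = x j - y j := fun j => rfl
  set P : ℝ := inner ℝ g τ with hP
  set Q : ℝ := inner ℝ g d with hQ
  set T : ℝ := inner ℝ τ d with hT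
  set D : ℝ := ‖d‖ with hD
  have hD0 : 0 ≤ D := norm_nonneg _
  have hD1 : D ≤ 1 := hxy
  -- per-term expansion
  have hterm : ∀ j : Fin n,
      ((μ * fderiv ℝ ψ y (EuclideanSpace.single j 1) : ℂ)
          - (-(τ j : ℂ) - Complex.I * ((x j : ℂ) - (y j : ℂ)))) ^ 2
        = (((μ * g j + τ j)^2 - (x j - y j)^2 : ℝ) : ℂ)
          + 2 * Complex.I * (((μ * g j + τ j) * (x j - y j) : ℝ) : ℂ) := by
    intro j
    rw [hfd j]
    have hab : (μ : ℂ) * (g j : ℂ) - (-(τ j : ℂ) - Complex.I * ((x j : ℂ) - (y j : ℂ)))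
        = (((μ * g j + τ j : ℝ)) : ℂ) + Complex.I * (((x j - y j : ℝ)) : ℂ) := by
      push_cast; ring
    rw [hab]
    have expand : ((((μ * g j + τ j : ℝ)) : ℂ) + Complex.I * (((x j - y j : ℝ)) : ℂ))^2
        = (((μ * g j + τ j : ℝ)) : ℂ)^2
          + 2 * Complex.I * ((((μ * g j + τ j : ℝ)) : ℂ) * (((x j - y j : ℝ)) : ℂ))
          + Complex.I^2 * (((x j - y j : ℝ)) : ℂ)^2 := by ring
    rw [expand, Complex.I_sq]
    push_cast
    ring
  -- sum identities over ℝ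
  have hsumA : ∑ j : Fin n, (μ * g j + τ j)^2
      = μ^2 * ‖g‖^2 + 2 * μ * P + 1 := by
    have hg2 : ‖g‖^2 = ∑ j : Fin n, g j * g j := by
      rw [← real_inner_self_eq_norm_sq]
      simp only [PiLp.inner_apply, RCLike.inner_apply, conj_trivial]
    have hτ2 : ∑ j : Fin n, τ j * τ j = 1 := by
      have h : ‖τ‖^2 = ∑ j : Fin n, τ j * τ j := by
        rw [← real_inner_self_eq_norm_sq]
        simp only [PiLp.inner_apply, RCLike.inner_apply, conj_trivial]
      rw [← h, hτ]; norm_num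
    have hPsum : P = ∑ j : Fin n, g j * τ j := by
      rw [hP]; simp [PiLp.inner_apply, RCLike.inner_apply, mul_comm]
    have hsplit : ∑ j : Fin n, (μ * g j + τ j)^2
        = μ^2 * ∑ j : Fin n, g j * g j + 2 * μ * ∑ j : Fin n, g j * τ j
          + ∑ j : Fin n, τ j * τ j := by
      rw [Finset.mul_sum, Finset.mul_sum, ← Finset.sum_add_distrib,
        ← Finset.sum_add_distrib]
      exact Finset.sum_congr rfl fun j _ => by ring
    rw [hsplit, ← hg2, ← hPsum, hτ2]
  have hsumB : ∑ j : Fin n, (x j - y j)^2 = D^2 := by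
    rw [hD, ← real_inner_self_eq_norm_sq]
    simp only [PiLp.inner_apply, RCLike.inner_apply, conj_trivial]
    apply Finset.sum_congr rfl
    intro j _
    rw [hdj j]; ring
  have hsumC : ∑ j : Fin n, (μ * g j + τ j) * (x j - y j) = μ * Q + T := by
    have hQsum : Q = ∑ j : Fin n, g j * d j := by
      rw [hQ]; simp [PiLp.inner_apply, RCLike.inner_apply, mul_comm]
    have hTsum : T = ∑ j : Fin n, τ j * d j := by
      rw [hT]; simp [PiLp.inner_apply, RCLike.inner_apply, mul_comm]
    rw [hQsum, hTsum, Finset.mul_sum, ← Finset.sum_add_distrib]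
    apply Finset.sum_congr rfl
    intro j _
    rw [← hdj j]; ring
  -- eikonal
  have heiky : μ^2 * ‖g‖^2 + μ^2 * V y = 0 := by
    have := heik y
    rw [← hgdef] at this
    nlinarith [this]
  -- the main complex identity
  have hkey : (∑ j : Fin n,
          ((μ * fderiv ℝ ψ y (EuclideanSpace.single j 1) : ℂ)
            - (-(τ j : ℂ) - Complex.I * ((x j : ℂ) - (y j : ℂ)))) ^ 2)
        + (μ : ℂ) ^ 2 * ((V y : ℂ) - ρ) - 1
      = ((2 * μ * P - D^2 : ℝ) : ℂ) + 2 * Complex.I * ((μ * Q + T : ℝ) : ℂ)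
          - (μ^2 : ℝ) * ρ := by
    rw [Finset.sum_congr rfl (fun j _ => hterm j)]
    rw [Finset.sum_add_distrib, ← Complex.ofReal_sum]
    rw [← Finset.mul_sum, ← Complex.ofReal_sum]
    rw [Finset.sum_sub_distrib, hsumA, hsumB, hsumC]
    have : (μ:ℝ)^2 * ‖g‖^2 = -(μ^2 * V y) := by linarith [heiky]
    rw [this]
    push_cast
    ring
  rw [hkey]
  -- triangle inequality bound
  have habs : ‖(((2 * μ * P - D^2 : ℝ) : ℂ)
        + 2 * Complex.I * ((μ * Q + T : ℝ) : ℂ) - (μ^2 : ℝ) * ρ)‖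
      ≤ |2 * μ * P - D^2| + 2 * |μ * Q + T| + μ^2 * R := by
    have h1 := norm_add_le (((2 * μ * P - D^2 : ℝ) : ℂ))
      (2 * Complex.I * ((μ * Q + T : ℝ) : ℂ))
    have h2 := norm_add_le (((2 * μ * P - D^2 : ℝ) : ℂ)
      + 2 * Complex.I * ((μ * Q + T : ℝ) : ℂ)) (-((μ^2 : ℝ) * ρ))
    rw [← sub_eq_add_neg] at h2
    have h3 : ‖(2 * Complex.I * ((μ * Q + T : ℝ) : ℂ))‖
        = 2 * |μ * Q + T| := by
      rw [norm_mul, norm_mul, Complex.norm_two, Complex.norm_I, Complex.norm_real, Real.norm_eq_abs]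
      ring
    have h4 : ‖(-((μ^2 : ℝ) * ρ))‖ ≤ μ^2 * R := by
      rw [norm_neg, norm_mul, Complex.norm_real, Real.norm_eq_abs]
      rw [_root_.abs_of_nonneg (by positivity : (0:ℝ) ≤ μ^2)]
      exact mul_le_mul_of_nonneg_left hρ (by positivity)
    calc ‖_‖ ≤ _ := h2
      _ ≤ (|2 * μ * P - D^2| + 2 * |μ * Q + T|) + μ^2 * R := by
          rw [h3, Complex.norm_real, Real.norm_eq_abs] at h1
          exact add_le_add h1 h4
  refine habs.trans ?_
  -- scalar bounds
  have hPb : |P| ≤ M := by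
    calc |P| ≤ ‖g‖ * ‖τ‖ := abs_real_inner_le_norm g τ
      _ ≤ M := by rw [hτ]; simpa using hgrad y
  have hQb : |Q| ≤ M * D := by
    calc |Q| ≤ ‖g‖ * ‖d‖ := abs_real_inner_le_norm g d
      _ ≤ M * D := by rw [← hD]; exact mul_le_mul_of_nonneg_right (hgrad y) hD0
  have hTb : |T| ≤ D := by
    calc |T| ≤ ‖τ‖ * ‖d‖ := abs_real_inner_le_norm τ d
      _ = D := by rw [hτ, one_mul, hD]
  have h5 : |2 * μ * P - D^2| ≤ 2 * μ * M + D := by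
    have : |2 * μ * P - D^2| ≤ |2 * μ * P| + |D^2| := abs_sub _ _
    have h6 : |2 * μ * P| ≤ 2 * μ * M := by
      rw [abs_mul, _root_.abs_of_nonneg (by positivity : (0:ℝ) ≤ 2 * μ)]
      exact mul_le_mul_of_nonneg_left hPb (by positivity)
    have h7 : |D^2| ≤ D := by
      rw [_root_.abs_of_nonneg (by positivity : (0:ℝ) ≤ D^2)]
      nlinarith
    linarith
  have h8 : |μ * Q + T| ≤ μ * M + D := by
    have : |μ * Q + T| ≤ |μ * Q| + |T| := abs_add_le _ _
    have h9 : |μ * Q| ≤ μ * M := by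
      rw [abs_mul, _root_.abs_of_nonneg hμ0.le]
      have hMD : M * D ≤ M := by
        have := mul_le_mul_of_nonneg_left hD1 hM.le
        simpa using this
      calc μ * |Q| ≤ μ * (M * D) := mul_le_mul_of_nonneg_left hQb hμ0.le
        _ ≤ μ * M := mul_le_mul_of_nonneg_left hMD hμ0.le
    linarith
  have h10 : μ^2 * R ≤ μ * R := by
    have hμ2 : μ^2 ≤ μ := by nlinarith
    exact mul_le_mul_of_nonneg_right hμ2 hR.le
  have hgoal : ‖x - y‖ = D := rfl
  nlinarith [mul_nonneg hM.le hD0, mul_nonneg hR.le hD0, hμ0.le, h5, h8, h10]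
end

section
/- Let n ≥ 1, let L > 0, and let V : ℝⁿ → ℝ be Lipschitz continuous with Lipschitz constant L. Assume the sublevel set K := {x ∈ ℝⁿ : V(x) ≤ 0} is nonempty. Then for every x ∈ ℝⁿ, the Agmon distance from x to K satisfies d_V(x, K) ≤ (2/3) √L · dist(x, K)^{3/2}, where dist(x,K) = inf_{y ∈ K} |x − y| is the Euclidean distance and d_V(x,K) := inf_{y ∈ K} d_V(x,y). -/
open MeasureTheory

/-- A path `γ` is piecewise `C¹` on `[0,1]`: it is continuous on `[0,1]` and
there is a finite partition `0 = t₀ < t₁ < ⋯ < t_m = 1` such that `γ` is `C¹`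
on each subinterval `[tᵢ, tᵢ₊₁]`. -/
def PiecewiseC1On01 {n : ℕ} (γ : ℝ → EuclideanSpace ℝ (Fin n)) : Prop :=
  ContinuousOn γ (Set.Icc 0 1) ∧
  ∃ (m : ℕ) (t : Fin (m + 1) → ℝ), StrictMono t ∧ t 0 = 0 ∧ t (Fin.last m) = 1 ∧
    ∀ i : Fin m, ContDiffOn ℝ 1 γ (Set.Icc (t i.castSucc) (t i.succ))

/-- The Agmon length `∫₀¹ √(max(V(γ(t)),0)) |γ'(t)| dt` of a path `γ`. -/
noncomputable def agmonLength {n : ℕ} (V : EuclideanSpace ℝ (Fin n) → ℝ)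
    (γ : ℝ → EuclideanSpace ℝ (Fin n)) : ℝ :=
  ∫ t in (0 : ℝ)..1, Real.sqrt (max (V (γ t)) 0) * ‖deriv γ t‖

/-- The Agmon distance `d_V(x,y)`: infimum of the Agmon length over piecewise
`C¹` paths from `x` to `y`. -/
noncomputable def agmonDist {n : ℕ} (V : EuclideanSpace ℝ (Fin n) → ℝ)
    (x y : EuclideanSpace ℝ (Fin n)) : ℝ :=
  sInf {c | ∃ γ : ℝ → EuclideanSpace ℝ (Fin n),
    PiecewiseC1On01 γ ∧ γ 0 = x ∧ γ 1 = y ∧ c = agmonLength V γ}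

/-- The Agmon distance between two sets: `d_V(A,B) = inf_{a∈A, b∈B} d_V(a,b)`. -/
noncomputable def agmonDistSet {n : ℕ} (V : EuclideanSpace ℝ (Fin n) → ℝ)
    (A B : Set (EuclideanSpace ℝ (Fin n))) : ℝ :=
  sInf {c | ∃ a ∈ A, ∃ b ∈ B, c = agmonDist V a b}

/-- The Agmon distance from a set to a point: `d_V(A,x) = inf_{a∈A} d_V(a,x)`. -/
noncomputable def agmonDistSetPt {n : ℕ} (V : EuclideanSpace ℝ (Fin n) → ℝ)
    (A : Set (EuclideanSpace ℝ (Fin n))) (x : EuclideanSpace ℝ (Fin n)) : ℝ :=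
  sInf {c | ∃ a ∈ A, c = agmonDist V a x}

/-- The Agmon distance from a point to a set: `d_V(x,B) = inf_{b∈B} d_V(x,b)`. -/
noncomputable def agmonDistPtSet {n : ℕ} (V : EuclideanSpace ℝ (Fin n) → ℝ)
    (x : EuclideanSpace ℝ (Fin n)) (B : Set (EuclideanSpace ℝ (Fin n))) : ℝ :=
  sInf {c | ∃ b ∈ B, c = agmonDist V x b}

/-- The 3/2-power estimate of Section 6: if `V` is `L`-Lipschitz and
`K = {V ≤ 0}` is nonempty, then `d_V(x,K) ≤ (2/3) √L · dist(x,K)^{3/2}`. -/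
theorem stmt7 {n : ℕ} (hn : 1 ≤ n) (L : ℝ) (hL : 0 < L)
    (V : EuclideanSpace ℝ (Fin n) → ℝ)
    (hlip : ∀ x y : EuclideanSpace ℝ (Fin n), |V x - V y| ≤ L * ‖x - y‖)
    (hK : {x : EuclideanSpace ℝ (Fin n) | V x ≤ 0}.Nonempty) :
    ∀ x : EuclideanSpace ℝ (Fin n),
      agmonDistPtSet V x {y | V y ≤ 0}
        ≤ (2 / 3) * Real.sqrt L *
            Metric.infDist x {y | V y ≤ 0} ^ (3 / 2 : ℝ) := by
  intro x
  have hVcont : Continuous V := by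
    have hlw : LipschitzWith L.toNNReal V := by
      apply LipschitzWith.of_dist_le_mul
      intro a b
      rw [Real.dist_eq, dist_eq_norm]
      calc |V a - V b| ≤ L * ‖a - b‖ := hlip a b
        _ = L.toNNReal * ‖a - b‖ := by rw [Real.coe_toNNReal L hL.le]
    exact hlw.continuous
  have hKclosed : IsClosed {y : EuclideanSpace ℝ (Fin n) | V y ≤ 0} :=
    isClosed_le hVcont continuous_const
  obtain ⟨y, hyK, hyd⟩ := hKclosed.exists_infDist_eq_dist hK x
  set d := ‖x - y‖ with hd
  have hdnn : 0 ≤ d := norm_nonneg _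
  have hinf : Metric.infDist x {y : EuclideanSpace ℝ (Fin n) | V y ≤ 0} = d := by
    rw [hyd, dist_eq_norm]
  set γ : ℝ → EuclideanSpace ℝ (Fin n) := fun t => x + t • (y - x) with hγ
  have hderiv : ∀ t : ℝ, deriv γ t = y - x := by
    intro t
    have h : HasDerivAt γ (y - x) t := by
      simpa [hγ] using ((hasDerivAt_id t).smul_const (y - x)).const_add x
    exact h.deriv
  have hγc1 : ContDiff ℝ 1 γ := contDiff_const.add (contDiff_id.smul contDiff_const)
  have hpw : PiecewiseC1On01 γ := by
    refine ⟨hγc1.continuous.continuousOn, 1, fun i => (i : ℝ), ?_, by simp, ?_, fun i => hγc1.contDiffOn⟩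
    · intro i j h
      show ((i:ℕ):ℝ) < ((j:ℕ):ℝ)
      exact_mod_cast h
    · simp [Fin.last]
  -- pointwise bound
  have key : ∀ t ∈ Set.Icc (0:ℝ) 1,
      Real.sqrt (max (V (γ t)) 0) * ‖deriv γ t‖
        ≤ Real.sqrt (L * d) * Real.sqrt (1 - t) * d := by
    intro t ht
    obtain ⟨ht0, ht1⟩ := ht
    rw [hderiv t]
    have hny : ‖y - x‖ = d := by rw [hd, norm_sub_rev]
    rw [hny]
    apply mul_le_mul_of_nonneg_right _ hdnn
    have hsub : γ t - y = (1 - t) • (x - y) := by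
      simp only [hγ]
      module
    have hnorm : ‖γ t - y‖ = (1 - t) * d := by
      rw [hsub, norm_smul, Real.norm_eq_abs, abs_of_nonneg (by linarith)]
    have hVle : V (γ t) ≤ L * d * (1 - t) := by
      have h1 : V (γ t) - V y ≤ L * ‖γ t - y‖ :=
        le_trans (le_abs_self _) (hlip _ _)
      rw [hnorm] at h1
      have := hyK
      simp only [Set.mem_setOf_eq] at this
      nlinarith
    have hmax : max (V (γ t)) 0 ≤ L * d * (1 - t) := by
      apply max_le hVle
      have : 0 ≤ L * d := mul_nonneg hL.le hdnn
      nlinarith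
    calc Real.sqrt (max (V (γ t)) 0) ≤ Real.sqrt (L * d * (1 - t)) :=
          Real.sqrt_le_sqrt hmax
      _ = Real.sqrt (L * d) * Real.sqrt (1 - t) :=
          Real.sqrt_mul (mul_nonneg hL.le hdnn) _
  -- integrability
  have hfun_eq : (fun t => Real.sqrt (max (V (γ t)) 0) * ‖deriv γ t‖)
      = fun t => Real.sqrt (max (V (γ t)) 0) * d := by
    funext t
    rw [hderiv t, norm_sub_rev]
  have hint1 : IntervalIntegrable
      (fun t => Real.sqrt (max (V (γ t)) 0) * ‖deriv γ t‖) volume 0 1 := by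
    rw [hfun_eq]
    exact ((Real.continuous_sqrt.comp
      (((hVcont.comp hγc1.continuous)).max continuous_const)).mul
      continuous_const).intervalIntegrable 0 1
  have hint2 : IntervalIntegrable
      (fun t => Real.sqrt (L * d) * Real.sqrt (1 - t) * d) volume 0 1 := by
    exact ((continuous_const.mul
      ((continuous_const.sub continuous_id).sqrt)).mul
      continuous_const).intervalIntegrable 0 1
  -- the integral of sqrt (1 - t)
  have hI : ∫ t in (0:ℝ)..1, Real.sqrt (1 - t) = 2/3 := by
    have h1 : ∫ t in (0:ℝ)..1, Real.sqrt (1 - t) = ∫ t in (0:ℝ)..1, Real.sqrt t := by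
      have := intervalIntegral.integral_comp_sub_left (a := (0:ℝ)) (b := 1) Real.sqrt 1
      simpa using this
    rw [h1]
    have h2 : ∫ t in (0:ℝ)..1, Real.sqrt t = ∫ t in (0:ℝ)..1, t ^ ((1:ℝ)/2) := by
      apply intervalIntegral.integral_congr
      intro t _
      exact Real.sqrt_eq_rpow t
    rw [h2, integral_rpow (Or.inl (by norm_num))]
    norm_num
  have hlen : agmonLength V γ ≤ Real.sqrt (L * d) * d * (2/3) := by
    have h1 : agmonLength V γ ≤ ∫ t in (0:ℝ)..1, Real.sqrt (L * d) * Real.sqrt (1 - t) * d :=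
      intervalIntegral.integral_mono_on (by norm_num) hint1 hint2 key
    have h2 : ∫ t in (0:ℝ)..1, Real.sqrt (L * d) * Real.sqrt (1 - t) * d
        = Real.sqrt (L * d) * d * (2/3) := by
      have : (fun t => Real.sqrt (L * d) * Real.sqrt (1 - t) * d)
          = fun t => (Real.sqrt (L * d) * d) * Real.sqrt (1 - t) := by
        funext t; ring
      rw [this, intervalIntegral.integral_const_mul, hI]
    linarith [h2 ▸ h1]
  -- collect nonnegativity facts
  have hlen_nonneg : ∀ g : ℝ → EuclideanSpace ℝ (Fin n), 0 ≤ agmonLength V g := by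
    intro g
    apply intervalIntegral.integral_nonneg (by norm_num)
    intro t _
    exact mul_nonneg (Real.sqrt_nonneg _) (norm_nonneg _)
  have hdist_nonneg : ∀ a b : EuclideanSpace ℝ (Fin n), 0 ≤ agmonDist V a b := by
    intro a b
    apply Real.sInf_nonneg
    rintro c ⟨g, _, _, _, rfl⟩
    exact hlen_nonneg g
  -- agmonDist x y ≤ agmonLength V γ
  have hxy : agmonDist V x y ≤ agmonLength V γ := by
    apply csInf_le
    · refine ⟨0, ?_⟩
      rintro c ⟨g, _, _, _, rfl⟩
      exact hlen_nonneg g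
    · refine ⟨γ, hpw, by simp [hγ], ?_, rfl⟩
      simp [hγ]
  -- agmonDistPtSet ≤ agmonDist x y
  have hpt : agmonDistPtSet V x {y : EuclideanSpace ℝ (Fin n) | V y ≤ 0} ≤ agmonDist V x y := by
    apply csInf_le
    · refine ⟨0, ?_⟩
      rintro c ⟨b, _, rfl⟩
      exact hdist_nonneg x b
    · exact ⟨y, hyK, rfl⟩
  -- final arithmetic
  rw [hinf]
  have hrpow : d ^ ((3:ℝ)/2) = d * Real.sqrt d := by
    rw [show (3:ℝ)/2 = 1 + 1/2 by norm_num, Real.rpow_add' hdnn (by norm_num),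
      Real.rpow_one, ← Real.sqrt_eq_rpow]
  have hsqrtmul : Real.sqrt (L * d) = Real.sqrt L * Real.sqrt d :=
    Real.sqrt_mul hL.le d
  calc agmonDistPtSet V x {y : EuclideanSpace ℝ (Fin n) | V y ≤ 0}
      ≤ agmonLength V γ := le_trans hpt hxy
    _ ≤ Real.sqrt (L * d) * d * (2/3) := hlen
    _ = 2 / 3 * Real.sqrt L * d ^ ((3:ℝ)/2) := by
        rw [hsqrtmul, hrpow]; ring
end

section
/- Let n ≥ 1 and let V : ℝⁿ → ℝ be continuous. Let U ⊆ ℝⁿ be nonempty and compact, let M ⊆ ℝⁿ be nonempty and closed, with U ∩ M = ∅ and {x ∈ ℝⁿ : V(x) ≤ 0} ⊆ U ∪ M. Then the Agmon distance between U and M is strictly positive: d_V(U, M) > 0. -/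
open MeasureTheory

section AuxForStmt9
open Set
variable {E : Type*} [NormedAddCommGroup E] [NormedSpace ℝ E] [CompleteSpace E]

variable {E : Type*} [NormedAddCommGroup E] [NormedSpace ℝ E] [CompleteSpace E]

private lemma ae_ne_vol (c : ℝ) : ∀ᵐ t : ℝ, t ≠ c := by
  rw [ae_iff]
  have : {a : ℝ | ¬ a ≠ c} = {c} := by ext a; simp
  rw [this]
  exact Real.volume_singleton

private lemma ae_Ioc_deriv_eq {γ : ℝ → E} {c d : ℝ} :
    (fun t => deriv γ t) =ᶠ[ae (volume.restrict (Set.Ioc c d))] derivWithin γ (Set.Icc c d) := by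
  filter_upwards [ae_restrict_of_ae (ae_ne_vol d),
    ae_restrict_mem measurableSet_Ioc] with t h1 h2
  exact (derivWithin_of_mem_nhds (Icc_mem_nhds h2.1 (lt_of_le_of_ne h2.2 h1))).symm

private lemma intervalIntegrable_deriv_of_contDiffOn {γ : ℝ → E} {c d : ℝ} (hcd : c ≤ d)
    (h : ContDiffOn ℝ 1 γ (Set.Icc c d)) :
    IntervalIntegrable (deriv γ) volume c d := by
  rcases eq_or_lt_of_le hcd with rfl | hlt
  · rw [intervalIntegrable_iff]
    simp
  · have hd : ContinuousOn (derivWithin γ (Set.Icc c d)) (Set.Icc c d) :=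
      h.continuousOn_derivWithin (uniqueDiffOn_Icc hlt) le_rfl
    have hi : IntervalIntegrable (derivWithin γ (Set.Icc c d)) volume c d :=
      ContinuousOn.intervalIntegrable (by rwa [Set.uIcc_of_le hcd])
    rw [intervalIntegrable_iff, Set.uIoc_of_le hcd] at hi ⊢
    exact hi.congr ae_Ioc_deriv_eq.symm

private lemma norm_sub_le_integral_norm_deriv {γ : ℝ → E} {c d : ℝ} (hcd : c ≤ d)
    (h : ContDiffOn ℝ 1 γ (Set.Icc c d)) :
    ‖γ d - γ c‖ ≤ ∫ t in c..d, ‖deriv γ t‖ := by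
  have hint := intervalIntegrable_deriv_of_contDiffOn hcd h
  have heq : ∫ t in c..d, deriv γ t = γ d - γ c := by
    apply intervalIntegral.integral_eq_sub_of_hasDeriv_right_of_le hcd h.continuousOn _ hint
    intro x hx
    have hdiff : DifferentiableAt ℝ γ x :=
      (h.differentiableOn one_ne_zero x ⟨hx.1.le, hx.2.le⟩).differentiableAt
        (Icc_mem_nhds hx.1 hx.2)
    exact hdiff.hasDerivAt.hasDerivWithinAt
  calc ‖γ d - γ c‖ = ‖∫ t in c..d, deriv γ t‖ := by rw [heq]
    _ ≤ ∫ t in c..d, ‖deriv γ t‖ := intervalIntegral.norm_integral_le_integral_norm hcd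

private lemma chain_deriv {γ : ℝ → E} (T : ℕ → ℝ) :
    ∀ m : ℕ, (∀ i < m, T i ≤ T (i+1)) →
    (∀ i < m, ContDiffOn ℝ 1 γ (Set.Icc (T i) (T (i+1)))) →
    ∀ a b : ℝ, T 0 ≤ a → a ≤ b → b ≤ T m →
      IntervalIntegrable (fun s => ‖deriv γ s‖) volume a b ∧
      ‖γ b - γ a‖ ≤ ∫ s in a..b, ‖deriv γ s‖ := by
  intro m
  induction m with
  | zero =>
    intro _ _ a b ha hab hb
    have hba : a = b := le_antisymm hab (hb.trans ha)
    subst hba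
    constructor
    · rw [intervalIntegrable_iff]; simp
    · simp
  | succ m ih =>
    intro hmono hp a b ha hab hb
    have hTm : T m ≤ T (m+1) := hmono m (Nat.lt_succ_self m)
    have hmono' : ∀ i < m, T i ≤ T (i+1) := fun i hi => hmono i (hi.trans (Nat.lt_succ_self m))
    have hp' : ∀ i < m, ContDiffOn ℝ 1 γ (Set.Icc (T i) (T (i+1))) :=
      fun i hi => hp i (hi.trans (Nat.lt_succ_self m))
    by_cases hbm : b ≤ T m
    · exact ih hmono' hp' a b ha hab hbm
    push_neg at hbm
    by_cases ham : T m ≤ a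
    · have hsub : Set.Icc a b ⊆ Set.Icc (T m) (T (m+1)) := Set.Icc_subset_Icc ham hb
      have h1 : ContDiffOn ℝ 1 γ (Set.Icc a b) := (hp m (Nat.lt_succ_self m)).mono hsub
      exact ⟨(intervalIntegrable_deriv_of_contDiffOn hab h1).norm,
        norm_sub_le_integral_norm_deriv hab h1⟩
    push_neg at ham
    have h1 := ih hmono' hp' a (T m) ha ham.le le_rfl
    have hsub : Set.Icc (T m) b ⊆ Set.Icc (T m) (T (m+1)) := Set.Icc_subset_Icc le_rfl hb
    have hC : ContDiffOn ℝ 1 γ (Set.Icc (T m) b) := (hp m (Nat.lt_succ_self m)).mono hsub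
    have h2int := (intervalIntegrable_deriv_of_contDiffOn hbm.le hC).norm
    have h2 := norm_sub_le_integral_norm_deriv hbm.le hC
    refine ⟨h1.1.trans h2int, ?_⟩
    have hadd := intervalIntegral.integral_add_adjacent_intervals (μ := volume)
      (f := fun s => ‖deriv γ s‖) h1.1 h2int
    have tri : ‖γ b - γ a‖ ≤ ‖γ (T m) - γ a‖ + ‖γ b - γ (T m)‖ := by
      have h := dist_triangle (γ a) (γ (T m)) (γ b)
      rw [dist_eq_norm, dist_eq_norm, dist_eq_norm] at h
      calc ‖γ b - γ a‖ = ‖γ a - γ b‖ := (norm_sub_rev _ _)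
        _ ≤ ‖γ a - γ (T m)‖ + ‖γ (T m) - γ b‖ := h
        _ = ‖γ (T m) - γ a‖ + ‖γ b - γ (T m)‖ := by rw [norm_sub_rev (γ a) (γ (T m)), norm_sub_rev (γ (T m)) (γ b)]
    calc ‖γ b - γ a‖ ≤ ‖γ (T m) - γ a‖ + ‖γ b - γ (T m)‖ := tri
      _ ≤ (∫ s in a..(T m), ‖deriv γ s‖) + ∫ s in (T m)..b, ‖deriv γ s‖ :=
          add_le_add h1.2 h2
      _ = ∫ s in a..b, ‖deriv γ s‖ := hadd


-- straight-line path
lemma line_exists (V : EuclideanSpace ℝ (Fin n) → ℝ) (a b : EuclideanSpace ℝ (Fin n)) :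
    ∃ c, ∃ γ : ℝ → EuclideanSpace ℝ (Fin n),
      PiecewiseC1On01 γ ∧ γ 0 = a ∧ γ 1 = b ∧ c = agmonLength V γ := by
  have hsm : ContDiff ℝ 1 (fun s : ℝ => a + s • (b - a)) :=
    contDiff_const.add (contDiff_id.smul contDiff_const)
  refine ⟨_, fun s : ℝ => a + s • (b - a), ⟨hsm.continuous.continuousOn, 1,
    fun i => ((i : ℕ) : ℝ), ?_, by simp, by simp [Fin.last], ?_⟩, by simp, by simp, rfl⟩
  · intro i j hij
    exact_mod_cast Nat.cast_lt.2 hij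
  · intro i
    exact hsm.contDiffOn


end AuxForStmt9

section MainStmt9
open Set

/-- Positivity of the Agmon distance `S₀ = d_V(U,M) > 0` (end of Section 2 of
the paper): if `V` is continuous, `U` is compact and nonempty, `M` is closed
and nonempty, `U ∩ M = ∅`, and `{V ≤ 0} ⊆ U ∪ M`, then `d_V(U,M) > 0`. -/
theorem stmt9 {n : ℕ} (hn : 1 ≤ n) (V : EuclideanSpace ℝ (Fin n) → ℝ)
    (hV : Continuous V) (U M : Set (EuclideanSpace ℝ (Fin n)))
    (hUne : U.Nonempty) (hUcomp : IsCompact U)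
    (hMne : M.Nonempty) (hMclosed : IsClosed M)
    (hdisj : U ∩ M = ∅)
    (hsub : {x : EuclideanSpace ℝ (Fin n) | V x ≤ 0} ⊆ U ∪ M) :
    0 < agmonDistSet V U M := by
  classical
  have hUM : ∀ x ∈ U, x ∉ M := by
    intro x hx hm
    have : x ∈ U ∩ M := ⟨hx, hm⟩
    rw [hdisj] at this
    exact absurd this (Set.notMem_empty x)
  -- separation radius r0
  obtain ⟨u0, hu0U, hu0min⟩ := hUcomp.exists_isMinOn hUne
    ((Metric.continuous_infDist_pt M).continuousOn)
  set r0 : ℝ := Metric.infDist u0 M with hr0def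
  have hr0pos : 0 < r0 := (hMclosed.notMem_iff_infDist_pos hMne).1 (hUM u0 hu0U)
  have hsep : ∀ x ∈ U, r0 ≤ Metric.infDist x M := fun x hx => isMinOn_iff.mp hu0min x hx
  have hMfar : ∀ x ∈ M, r0 ≤ Metric.infDist x U := by
    intro x hx
    by_contra hlt
    push_neg at hlt
    obtain ⟨u, huU, hdu⟩ := (Metric.infDist_lt_iff hUne).1 hlt
    have h1 : Metric.infDist u M ≤ dist u x := Metric.infDist_le_dist_of_mem hx
    have h2 := hsep u huU
    rw [dist_comm] at hdu
    linarith
  -- the shell A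
  set A : Set (EuclideanSpace ℝ (Fin n)) :=
    (fun x => Metric.infDist x U) ⁻¹' (Set.Icc (r0/4) (r0/2)) with hAdef
  have hAclosed : IsClosed A := isClosed_Icc.preimage (Metric.continuous_infDist_pt U)
  obtain ⟨R, hR⟩ := hUcomp.isBounded.subset_closedBall u0
  have hAbdd : A ⊆ Metric.closedBall u0 (r0 + R) := by
    intro x hx
    have hle : Metric.infDist x U ≤ r0/2 := hx.2
    have hlt : Metric.infDist x U < r0 := by linarith
    obtain ⟨u, huU, hdu⟩ := (Metric.infDist_lt_iff hUne).1 hlt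
    have := hR huU
    rw [Metric.mem_closedBall] at this ⊢
    calc dist x u0 ≤ dist x u + dist u u0 := dist_triangle _ _ _
      _ ≤ r0 + R := add_le_add hdu.le this
  have hAcomp : IsCompact A :=
    (Metric.isCompact_iff_isClosed_bounded).2
      ⟨hAclosed, Metric.isBounded_closedBall.subset hAbdd⟩
  have hApos : ∀ x ∈ A, 0 < V x := by
    intro x hx
    by_contra h
    push_neg at h
    rcases hsub h with hxU | hxM
    · have : Metric.infDist x U = 0 := Metric.infDist_zero_of_mem hxU
      have h4 : r0/4 ≤ Metric.infDist x U := hx.1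
      linarith
    · have h4 : r0 ≤ Metric.infDist x U := hMfar x hxM
      have h5 : Metric.infDist x U ≤ r0/2 := hx.2
      linarith
  obtain ⟨ε, hεpos, hεle⟩ : ∃ ε > 0, ∀ x ∈ A, ε ≤ V x := by
    rcases A.eq_empty_or_nonempty with hA | hA
    · exact ⟨1, one_pos, by simp [hA]⟩
    · obtain ⟨x0, hx0A, hx0min⟩ := hAcomp.exists_isMinOn hA hV.continuousOn
      exact ⟨V x0, hApos x0 hx0A, fun x hx => isMinOn_iff.mp hx0min x hx⟩
  set δ : ℝ := Real.sqrt ε * (r0/4) with hδdef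
  have hδpos : 0 < δ := mul_pos (Real.sqrt_pos.2 hεpos) (by linarith)
  -- key per-path estimate
  have key : ∀ ζ : ℝ → EuclideanSpace ℝ (Fin n),
      PiecewiseC1On01 ζ → ζ 0 ∈ U → ζ 1 ∈ M → δ ≤ agmonLength V ζ := by
    rintro ζ ⟨hζc, m, t, htmono, ht0, htlast, hpieces⟩ hζ0 hζ1
    set T : ℕ → ℝ := fun k => t ⟨min k m, Nat.lt_succ_of_le (min_le_right k m)⟩ with hTdef
    have hTeq : ∀ k (h : k ≤ m), T k = t ⟨k, Nat.lt_succ_of_le h⟩ := by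
      intro k h
      simp only [hTdef]
      congr 1
      exact Fin.ext (by simp [min_eq_left h])
    have hT0 : T 0 = 0 := by
      rw [hTeq 0 (Nat.zero_le m), show (⟨0, Nat.lt_succ_of_le (Nat.zero_le m)⟩ : Fin (m+1)) = 0
        from Fin.ext rfl, ht0]
    have hTm : T m = 1 := by
      rw [hTeq m le_rfl, show (⟨m, Nat.lt_succ_of_le le_rfl⟩ : Fin (m+1)) = Fin.last m
        from Fin.ext rfl, htlast]
    have hTmono : ∀ i < m, T i ≤ T (i+1) := by
      intro i hi
      rw [hTeq i hi.le, hTeq (i+1) hi]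
      exact (htmono (by exact Fin.mk_lt_mk.2 (Nat.lt_succ_self i))).le
    have hTp : ∀ i < m, ContDiffOn ℝ 1 ζ (Set.Icc (T i) (T (i+1))) := by
      intro i hi
      rw [hTeq i hi.le, hTeq (i+1) hi]
      have := hpieces ⟨i, hi⟩
      have e1 : (⟨i, hi⟩ : Fin m).castSucc = (⟨i, Nat.lt_succ_of_le hi.le⟩ : Fin (m+1)) :=
        Fin.ext rfl
      have e2 : (⟨i, hi⟩ : Fin m).succ = (⟨i+1, Nat.lt_succ_of_le hi⟩ : Fin (m+1)) :=
        Fin.ext rfl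
      rwa [e1, e2] at this
    -- crossing times
    set f : ℝ → ℝ := fun s => Metric.infDist (ζ s) U with hfdef
    have hfc : ContinuousOn f (Set.Icc 0 1) :=
      (Metric.continuous_infDist_pt U).comp_continuousOn hζc
    have hf0 : f 0 = 0 := Metric.infDist_zero_of_mem hζ0
    have hf1 : r0 ≤ f 1 := hMfar _ hζ1
    set Tset : Set ℝ := Set.Icc (0:ℝ) 1 ∩ f ⁻¹' Set.Ici (r0/2) with hTsetdef
    have hTclosed : IsClosed Tset := hfc.preimage_isClosed_of_isClosed isClosed_Icc isClosed_Ici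
    have h1T : (1:ℝ) ∈ Tset := by
      refine ⟨⟨zero_le_one, le_rfl⟩, ?_⟩
      simp only [Set.mem_preimage, Set.mem_Ici]
      linarith
    have hTbdd : BddBelow Tset := ⟨0, fun s hs => hs.1.1⟩
    set s₁ : ℝ := sInf Tset with hs₁def
    have hs₁T : s₁ ∈ Tset := hTclosed.csInf_mem ⟨1, h1T⟩ hTbdd
    have hs₁01 : s₁ ∈ Set.Icc (0:ℝ) 1 := hs₁T.1
    have hfs₁ : r0/2 ≤ f s₁ := hs₁T.2
    have hnotT : ∀ s ∈ Set.Icc (0:ℝ) 1, s < s₁ → f s < r0/2 := by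
      intro s hs hlt
      by_contra hcon
      push_neg at hcon
      exact absurd (csInf_le hTbdd ⟨hs, hcon⟩) (not_le.2 hlt)
    set Sset : Set ℝ := Set.Icc (0:ℝ) s₁ ∩ f ⁻¹' Set.Iic (r0/4) with hSsetdef
    have hSclosed : IsClosed Sset :=
      (hfc.mono (Set.Icc_subset_Icc le_rfl hs₁01.2)).preimage_isClosed_of_isClosed
        isClosed_Icc isClosed_Iic
    have h0S : (0:ℝ) ∈ Sset := by
      refine ⟨⟨le_rfl, hs₁01.1⟩, ?_⟩
      simp only [Set.mem_preimage, Set.mem_Iic]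
      rw [hf0]
      linarith
    have hSbdd : BddAbove Sset := ⟨s₁, fun s hs => hs.1.2⟩
    set s₀ : ℝ := sSup Sset with hs₀def
    have hs₀S : s₀ ∈ Sset := hSclosed.csSup_mem ⟨0, h0S⟩ hSbdd
    have hs₀0 : (0:ℝ) ≤ s₀ := hs₀S.1.1
    have hfs₀ : f s₀ ≤ r0/4 := hs₀S.2
    have hs₀s₁ : s₀ < s₁ := by
      rcases lt_or_eq_of_le hs₀S.1.2 with h | h
      · exact h
      · exfalso; rw [h] at hfs₀; linarith
    have hs₁le1 : s₁ ≤ 1 := hs₁01.2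
    have hnotS : ∀ s, s₀ < s → s ≤ s₁ → r0/4 < f s := by
      intro s h1 h2
      by_contra hcon
      push_neg at hcon
      have hmem : s ∈ Sset := ⟨⟨hs₀0.trans h1.le, h2⟩, hcon⟩
      exact absurd (le_csSup hSbdd hmem) (not_le.2 h1)
    have hshell : ∀ s ∈ Set.Ioo s₀ s₁, ζ s ∈ A := by
      intro s hs
      refine ⟨(hnotS s hs.1 hs.2.le).le, ?_⟩
      exact (hnotT s ⟨hs₀0.trans hs.1.le, hs.2.le.trans hs₁le1⟩ hs.2).le
    -- integrals
    set g : ℝ → ℝ := fun s => Real.sqrt (max (V (ζ s)) 0) * ‖deriv ζ s‖ with hgdef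
    have hgnonneg : ∀ s, 0 ≤ g s := fun s => mul_nonneg (Real.sqrt_nonneg _) (norm_nonneg _)
    have hsqc : ContinuousOn (fun s => Real.sqrt (max (V (ζ s)) 0)) (Set.Icc (0:ℝ) 1) :=
      Real.continuous_sqrt.comp_continuousOn ((hV.comp_continuousOn hζc).sup continuousOn_const)
    obtain ⟨C, hC⟩ := (isCompact_Icc (a := (0:ℝ)) (b := 1)).exists_bound_of_continuousOn hsqc
    have hgint : ∀ a b : ℝ, 0 ≤ a → a ≤ b → b ≤ 1 → IntervalIntegrable g volume a b := by
      intro a b ha hab hb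
      obtain ⟨hI, -⟩ := chain_deriv T m hTmono hTp a b (by rw [hT0]; exact ha) hab
        (by rw [hTm]; exact hb)
      rw [intervalIntegrable_iff, Set.uIoc_of_le hab] at hI ⊢
      have hmeas : AEStronglyMeasurable (fun s => Real.sqrt (max (V (ζ s)) 0))
          (volume.restrict (Set.Ioc a b)) :=
        (hsqc.mono (fun s hs => ⟨ha.trans hs.1.le, hs.2.trans hb⟩)).aestronglyMeasurable
          measurableSet_Ioc
      have hbound : ∀ᵐ s ∂(volume.restrict (Set.Ioc a b)),
          ‖Real.sqrt (max (V (ζ s)) 0)‖ ≤ C := by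
        filter_upwards [ae_restrict_mem measurableSet_Ioc] with s hs
        exact hC s ⟨ha.trans hs.1.le, hs.2.trans hb⟩
      exact Integrable.bdd_mul hI hmeas hbound
    obtain ⟨hIs, hFTC⟩ := chain_deriv T m hTmono hTp s₀ s₁ (by rw [hT0]; exact hs₀0)
      hs₀s₁.le (by rw [hTm]; exact hs₁le1)
    have hdistlb : r0/4 ≤ ‖ζ s₁ - ζ s₀‖ := by
      have h3 : f s₁ ≤ f s₀ + dist (ζ s₁) (ζ s₀) := Metric.infDist_le_infDist_add_dist
      rw [dist_eq_norm] at h3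
      linarith
    have hmid : Real.sqrt ε * (r0/4) ≤ ∫ s in s₀..s₁, g s := by
      calc Real.sqrt ε * (r0/4) ≤ Real.sqrt ε * ‖ζ s₁ - ζ s₀‖ :=
            mul_le_mul_of_nonneg_left hdistlb (Real.sqrt_nonneg _)
        _ ≤ Real.sqrt ε * ∫ s in s₀..s₁, ‖deriv ζ s‖ :=
            mul_le_mul_of_nonneg_left hFTC (Real.sqrt_nonneg _)
        _ = ∫ s in s₀..s₁, Real.sqrt ε * ‖deriv ζ s‖ :=
            (intervalIntegral.integral_const_mul _ _).symm
        _ ≤ ∫ s in s₀..s₁, g s := by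
            apply intervalIntegral.integral_mono_ae_restrict hs₀s₁.le (hIs.const_mul _)
              (hgint s₀ s₁ hs₀0 hs₀s₁.le hs₁le1)
            have hae : ∀ᵐ s ∂(volume : Measure ℝ), s ≠ s₀ ∧ s ≠ s₁ :=
              (ae_ne_vol s₀).and (ae_ne_vol s₁)
            filter_upwards [ae_restrict_of_ae hae, ae_restrict_mem measurableSet_Icc]
              with s h1 h2
            have hmem : s ∈ Set.Ioo s₀ s₁ :=
              ⟨lt_of_le_of_ne h2.1 (Ne.symm h1.1), lt_of_le_of_ne h2.2 h1.2⟩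
            have hA := hshell s hmem
            have hle : ε ≤ max (V (ζ s)) 0 := le_trans (hεle _ hA) (le_max_left _ _)
            exact mul_le_mul_of_nonneg_right (Real.sqrt_le_sqrt hle) (norm_nonneg _)
    have hsplit : ∫ s in s₀..s₁, g s ≤ agmonLength V ζ := by
      have i1 := hgint 0 s₀ le_rfl hs₀0 (hs₀s₁.le.trans hs₁le1)
      have i2 := hgint s₀ s₁ hs₀0 hs₀s₁.le hs₁le1
      have i3 := hgint s₁ 1 (hs₀0.trans hs₀s₁.le) hs₁le1 le_rfl
      have e1 := intervalIntegral.integral_add_adjacent_intervals (μ := volume) (f := g)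
        i1 (i2.trans i3)
      have e2 := intervalIntegral.integral_add_adjacent_intervals (μ := volume) (f := g)
        i2 i3
      have p1 : 0 ≤ ∫ s in (0:ℝ)..s₀, g s :=
        intervalIntegral.integral_nonneg hs₀0 (fun u _ => hgnonneg u)
      have p3 : 0 ≤ ∫ s in s₁..(1:ℝ), g s :=
        intervalIntegral.integral_nonneg hs₁le1 (fun u _ => hgnonneg u)
      have : agmonLength V ζ = ∫ s in (0:ℝ)..1, g s := rfl
      rw [this, ← e1, ← e2]
      linarith
    calc δ = Real.sqrt ε * (r0/4) := rfl
      _ ≤ ∫ s in s₀..s₁, g s := hmid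
      _ ≤ agmonLength V ζ := hsplit
  -- assemble
  have hpair : ∀ a ∈ U, ∀ b ∈ M, δ ≤ agmonDist V a b := by
    intro a ha b hb
    apply le_csInf
    · obtain ⟨c, γ, h⟩ := line_exists V a b
      exact ⟨c, γ, h⟩
    · rintro c ⟨γ, hγ, h0, h1, rfl⟩
      exact key γ hγ (by rw [h0]; exact ha) (by rw [h1]; exact hb)
  have hfinal : δ ≤ agmonDistSet V U M := by
    apply le_csInf
    · obtain ⟨a, ha⟩ := hUne
      obtain ⟨b, hb⟩ := hMne
      exact ⟨agmonDist V a b, a, ha, b, hb, rfl⟩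
    · rintro c ⟨a, ha, b, hb, rfl⟩
      exact hpair a ha b hb
  linarith


end MainStmt9
end
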